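/- Let A = (1/√3)·[[0,0,0,−1],[√2,0,0,0],[0,1,0,0],[0,0,0,0]] and B = (1/√3)·[[0,√2,0,0],[0,0,1,0],[0,0,0,0],[1,0,0,0]] in M₄(ℂ). Then A·B − B·A = diag(−1, 1/3, 1/3, 1/3) and ‖A‖_F = ‖B‖_F = √(4/3). Hence the minimum of ‖A‖_F over pairs (A,B) with AB − BA = diag(−1,1/3,1/3,1/3) and ‖A‖_F = ‖B‖_F equals √(4/3). -/

import Mathlib

/-- The Frobenius (Hilbert–Schmidt) norm of a 4×4 complex matrix. -/
noncomputable def frobeniusNorm (A : Matrix (Fin 4) (Fin 4) ℂ) : ℝ :=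
  Real.sqrt (∑ i : Fin 4, ∑ j : Fin 4, ‖A i j‖ ^ 2)

noncomputable def Amat : Matrix (Fin 4) (Fin 4) ℂ :=
  (1 / (Real.sqrt 3 : ℂ)) •
    !![0, 0, 0, -1;
       (Real.sqrt 2 : ℂ), 0, 0, 0;
       0, 1, 0, 0;
       0, 0, 0, 0]

noncomputable def Bmat : Matrix (Fin 4) (Fin 4) ℂ :=
  (1 / (Real.sqrt 3 : ℂ)) •
    !![0, (Real.sqrt 2 : ℂ), 0, 0;
       0, 0, 1, 0;
       0, 0, 0, 0;
       1, 0, 0, 0]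

open Complex Finset Matrix

namespace CommLB

noncomputable def cdot (a b : Fin 4 → ℂ) : ℂ := ∑ i, (starRingEnd ℂ) (a i) * b i
noncomputable def vns (a : Fin 4 → ℂ) : ℝ := ∑ i, Complex.normSq (a i)
noncomputable def fns (M : Matrix (Fin 4) (Fin 4) ℂ) : ℝ := ∑ i, ∑ j, Complex.normSq (M i j)

lemma vns_nonneg (a : Fin 4 → ℂ) : 0 ≤ vns a :=
  Finset.sum_nonneg fun _ _ => Complex.normSq_nonneg _

lemma fns_nonneg (M : Matrix (Fin 4) (Fin 4) ℂ) : 0 ≤ fns M :=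
  Finset.sum_nonneg fun _ _ => Finset.sum_nonneg fun _ _ => Complex.normSq_nonneg _

lemma cdot_self (a : Fin 4 → ℂ) : cdot a a = (vns a : ℂ) := by
  simp only [cdot, vns]
  push_cast
  exact Finset.sum_congr rfl fun i _ => by rw [← Complex.normSq_eq_conj_mul_self]

lemma cdot_conj (a b : Fin 4 → ℂ) : cdot a b = (starRingEnd ℂ) (cdot b a) := by
  simp only [cdot, map_sum, _root_.map_mul, Complex.conj_conj]
  exact Finset.sum_congr rfl fun i _ => by ring

lemma mulVec_def (M : Matrix (Fin 4) (Fin 4) ℂ) (v : Fin 4 → ℂ) (i : Fin 4) :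
    (M *ᵥ v) i = ∑ j, M i j * v j := by
  simp [Matrix.mulVec, dotProduct]

lemma re_cdot_le (a b : Fin 4 → ℂ) : (cdot a b).re ≤ (vns a + vns b) / 2 := by
  have h : ∀ i : Fin 4, ((starRingEnd ℂ) (a i) * b i).re
      ≤ (Complex.normSq (a i) + Complex.normSq (b i)) / 2 := by
    intro i
    have h0 := Complex.normSq_nonneg (a i - b i)
    have h1 := Complex.normSq_sub (a i) (b i)
    have h2 : ((a i) * (starRingEnd ℂ) (b i)).re = ((starRingEnd ℂ) (a i) * b i).re := by
      have := Complex.conj_re ((a i) * (starRingEnd ℂ) (b i))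
      rw [← this, _root_.map_mul, Complex.conj_conj]
    linarith
  calc (cdot a b).re = ∑ i, ((starRingEnd ℂ) (a i) * b i).re := Complex.re_sum _ _
    _ ≤ ∑ i, (Complex.normSq (a i) + Complex.normSq (b i)) / 2 :=
        Finset.sum_le_sum fun i _ => h i
    _ = (vns a + vns b) / 2 := by rw [vns, vns, ← Finset.sum_add_distrib, ← Finset.sum_div]

lemma cdot_adj (M : Matrix (Fin 4) (Fin 4) ℂ) (w v : Fin 4 → ℂ) :
    cdot w (M *ᵥ v) = cdot (Mᴴ *ᵥ w) v := by
  simp only [cdot, mulVec_def, Matrix.conjTranspose_apply, Complex.star_def, map_sum, _root_.map_mul, Complex.conj_conj,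
    Finset.mul_sum, Finset.sum_mul]
  rw [Finset.sum_comm]
  exact Finset.sum_congr rfl fun i _ => Finset.sum_congr rfl fun j _ => by ring

lemma cdot_adj_self (M : Matrix (Fin 4) (Fin 4) ℂ) (w : Fin 4 → ℂ) :
    cdot w (Mᴴ *ᵥ w) = (starRingEnd ℂ) (cdot w (M *ᵥ w)) := by
  rw [cdot_conj w (Mᴴ *ᵥ w), ← cdot_adj]

lemma cdot_smul_right (a b : Fin 4 → ℂ) (c : ℂ) :
    cdot a (fun i => c * b i) = c * cdot a b := by
  simp only [cdot, Finset.mul_sum]; exact Finset.sum_congr rfl fun i _ => by ring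

lemma cdot_sub_right (a b c : Fin 4 → ℂ) :
    cdot a (fun i => b i - c i) = cdot a b - cdot a c := by
  simp only [cdot, ← Finset.sum_sub_distrib]
  exact Finset.sum_congr rfl fun i _ => by ring

lemma cdot_smul_left (a b : Fin 4 → ℂ) (c : ℂ) :
    cdot (fun i => c * a i) b = (starRingEnd ℂ) c * cdot a b := by
  simp only [cdot, _root_.map_mul, Finset.mul_sum]
  exact Finset.sum_congr rfl fun i _ => by ring

lemma cdot_sub_left (a b c : Fin 4 → ℂ) :
    cdot (fun i => a i - b i) c = cdot a c - cdot b c := by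
  simp only [cdot, map_sub, ← Finset.sum_sub_distrib]
  exact Finset.sum_congr rfl fun i _ => by ring

/-- projection expansion -/
lemma cdot_proj (w a b : Fin 4 → ℂ) (hw : cdot w w = 1) :
    cdot (fun i => a i - cdot w a * w i) (fun i => b i - cdot w b * w i)
      = cdot a b - (starRingEnd ℂ) (cdot w a) * cdot w b := by
  have h1 : cdot (fun i => a i - cdot w a * w i) (fun i => b i - cdot w b * w i)
      = cdot (fun i => a i - cdot w a * w i) b
        - cdot w b * cdot (fun i => a i - cdot w a * w i) w := by
    rw [show (fun i => b i - cdot w b * w i) = (fun i => b i - (fun j => cdot w b * w j) i) from rfl,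
      cdot_sub_right, cdot_smul_right]
  rw [h1, cdot_sub_left, cdot_sub_left, cdot_smul_left, cdot_smul_left, hw,
    cdot_conj a w]
  ring

lemma vns_proj (w u : Fin 4 → ℂ) (hw : cdot w w = 1) :
    vns (fun i => u i - cdot w u * w i) = vns u - Complex.normSq (cdot w u) := by
  have h := cdot_proj w u u hw
  have h2 := cdot_self (fun i => u i - cdot w u * w i)
  rw [h2, cdot_self] at h
  have h3 : ((vns (fun i => u i - cdot w u * w i) : ℂ)).re
      = ((vns u : ℂ) - (starRingEnd ℂ) (cdot w u) * cdot w u).re := by rw [h]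
  simpa [Complex.normSq_eq_conj_mul_self, Complex.normSq_apply] using h3


lemma fns_rank1 (M : Matrix (Fin 4) (Fin 4) ℂ) (p q : Fin 4 → ℂ) :
    fns (Matrix.of fun i j => M i j - p i * (starRingEnd ℂ) (q j))
      = fns M + vns p * vns q - 2 * (cdot p (M *ᵥ q)).re := by
  have e1 : ∀ i j : Fin 4, Complex.normSq (M i j - p i * (starRingEnd ℂ) (q j))
      = Complex.normSq (M i j) + Complex.normSq (p i) * Complex.normSq (q j)
        - 2 * ((starRingEnd ℂ) (p i) * (M i j * q j)).re := by
    intro i j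
    rw [Complex.normSq_sub]
    have h1 : Complex.normSq (p i * (starRingEnd ℂ) (q j))
        = Complex.normSq (p i) * Complex.normSq (q j) := by
      rw [Complex.normSq_mul, Complex.normSq_conj]
    have h2 : (M i j * (starRingEnd ℂ) (p i * (starRingEnd ℂ) (q j))).re
        = ((starRingEnd ℂ) (p i) * (M i j * q j)).re := by
      congr 1
      rw [_root_.map_mul, Complex.conj_conj]
      ring
    rw [h1, h2]
  have e2 : ∑ i, ∑ j, ((starRingEnd ℂ) (p i) * (M i j * q j)).re = (cdot p (M *ᵥ q)).re := by
    rw [cdot, Complex.re_sum]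
    refine Finset.sum_congr rfl fun i _ => ?_
    rw [mulVec_def, Finset.mul_sum, Complex.re_sum]
  calc fns (Matrix.of fun i j => M i j - p i * (starRingEnd ℂ) (q j))
      = ∑ i, ∑ j, (Complex.normSq (M i j) + Complex.normSq (p i) * Complex.normSq (q j)
        - 2 * ((starRingEnd ℂ) (p i) * (M i j * q j)).re) := by
        refine Finset.sum_congr rfl fun i _ => Finset.sum_congr rfl fun j _ => ?_
        exact e1 i j
    _ = fns M + vns p * vns q - 2 * (cdot p (M *ᵥ q)).re := by
        rw [← e2, fns, vns, vns]
        simp only [Finset.sum_sub_distrib, Finset.sum_add_distrib, ← Finset.mul_sum,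
          ← Finset.sum_mul]

lemma normb (M : Matrix (Fin 4) (Fin 4) ℂ) (w : Fin 4 → ℂ) (hw : cdot w w = 1) :
    vns (M *ᵥ w) + vns (Mᴴ *ᵥ w) - Complex.normSq (cdot w (M *ᵥ w)) ≤ fns M := by
  have hvw : vns w = 1 := by
    have h := (cdot_self w).symm.trans hw
    exact_mod_cast h
  set u : Fin 4 → ℂ := M *ᵥ w with hu
  set u' : Fin 4 → ℂ := Mᴴ *ᵥ w with hu'
  set x : ℂ := cdot w u with hx
  have hL := fns_rank1 M w u'
  have hMu' : (cdot w (M *ᵥ u')).re = vns u' := by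
    rw [cdot_adj, ← hu', cdot_self, Complex.ofReal_re]
  set L : Matrix (Fin 4) (Fin 4) ℂ := Matrix.of fun i j => M i j - w i * (starRingEnd ℂ) (u' j)
    with hLdef
  have hu'w : cdot u' w = x := by
    rw [cdot_conj u' w, cdot_adj_self, ← hx, Complex.conj_conj]
  have hLw : L *ᵥ w = fun i => u i - x * w i := by
    funext i
    rw [mulVec_def]
    have : ∀ j, L i j * w j = M i j * w j - w i * ((starRingEnd ℂ) (u' j) * w j) := by
      intro j; simp only [hLdef, Matrix.of_apply]; ring
    rw [Finset.sum_congr rfl fun j _ => this j, Finset.sum_sub_distrib, ← Finset.mul_sum,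
      ← cdot, hu'w, ← mulVec_def, ← hu]
    ring
  have hK := fns_rank1 L (fun i => u i - x * w i) w
  rw [hLw] at hK
  have hcz : (cdot (fun i => u i - x * w i) (fun i => u i - x * w i)).re
      = vns (fun i => u i - x * w i) := by rw [cdot_self, Complex.ofReal_re]
  have hvz : vns (fun i => u i - x * w i) = vns u - Complex.normSq x := by
    have := vns_proj w u hw
    rw [← hx] at this
    exact this
  have hKnn := fns_nonneg (Matrix.of fun i j =>
    L i j - (fun i => u i - x * w i) i * (starRingEnd ℂ) (w j))
  rw [hK, hL, hcz, hvz, hMu', hvw] at hKnn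
  nlinarith [vns_nonneg u', Complex.normSq_nonneg x]

lemma neg_re_cdot_le (a b : Fin 4 → ℂ) : -((cdot a b).re) ≤ (vns a + vns b) / 2 := by
  have h1 : cdot (fun i => (-1 : ℂ) * a i) b = -(cdot a b) := by
    rw [cdot_smul_left]; simp
  have h2 := re_cdot_le (fun i => (-1 : ℂ) * a i) b
  rw [h1] at h2
  have h3 : vns (fun i => (-1 : ℂ) * a i) = vns a := by
    simp [vns, Complex.normSq_mul]
  rw [h3] at h2
  simpa using h2

lemma commb (F G : Matrix (Fin 4) (Fin 4) ℂ) (w : Fin 4 → ℂ) (hw : cdot w w = 1) :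
    (cdot w ((F * G - G * F) *ᵥ w)).re
      ≤ (vns (F *ᵥ w) + vns (Fᴴ *ᵥ w) - 2 * Complex.normSq (cdot w (F *ᵥ w))
        + vns (G *ᵥ w) + vns (Gᴴ *ᵥ w) - 2 * Complex.normSq (cdot w (G *ᵥ w))) / 2 := by
  set u : Fin 4 → ℂ := F *ᵥ w with hu
  set v : Fin 4 → ℂ := G *ᵥ w with hv
  set u' : Fin 4 → ℂ := Fᴴ *ᵥ w with hu'
  set v' : Fin 4 → ℂ := Gᴴ *ᵥ w with hv'
  set x : ℂ := cdot w u with hx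
  set y : ℂ := cdot w v with hy
  have hsplit : cdot w ((F * G - G * F) *ᵥ w)
      = cdot w ((F * G) *ᵥ w) - cdot w ((G * F) *ᵥ w) := by
    rw [Matrix.sub_mulVec]
    exact cdot_sub_right w ((F * G) *ᵥ w) ((G * F) *ᵥ w)
  have h1 : cdot w ((F * G) *ᵥ w) = cdot u' v := by
    rw [← Matrix.mulVec_mulVec, cdot_adj]
  have h2 : cdot w ((G * F) *ᵥ w) = cdot v' u := by
    rw [← Matrix.mulVec_mulVec, cdot_adj]
  have hwu' : cdot w u' = (starRingEnd ℂ) x := by rw [hu', cdot_adj_self, hx, hu]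
  have hwv' : cdot w v' = (starRingEnd ℂ) y := by rw [hv', cdot_adj_self, hy, hv]
  have key : cdot u' v - cdot v' u
      = cdot (fun i => u' i - cdot w u' * w i) (fun i => v i - cdot w v * w i)
        - cdot (fun i => v' i - cdot w v' * w i) (fun i => u i - cdot w u * w i) := by
    rw [cdot_proj w u' v hw, cdot_proj w v' u hw, hwu', hwv', ← hx, ← hy]
    rw [Complex.conj_conj, Complex.conj_conj]
    ring
  have b1 := re_cdot_le (fun i => u' i - cdot w u' * w i) (fun i => v i - cdot w v * w i)
  have b2 := neg_re_cdot_le (fun i => v' i - cdot w v' * w i) (fun i => u i - cdot w u * w i)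
  have p1 : vns (fun i => u' i - cdot w u' * w i) = vns u' - Complex.normSq x := by
    rw [vns_proj w u' hw, hwu', Complex.normSq_conj]
  have p2 : vns (fun i => v i - cdot w v * w i) = vns v - Complex.normSq y := by
    rw [vns_proj w v hw, ← hy]
  have p3 : vns (fun i => v' i - cdot w v' * w i) = vns v' - Complex.normSq y := by
    rw [vns_proj w v' hw, hwv', Complex.normSq_conj]
  have p4 : vns (fun i => u i - cdot w u * w i) = vns u - Complex.normSq x := by
    rw [vns_proj w u hw, ← hx]
  rw [hsplit, h1, h2, key]
  rw [Complex.sub_re]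
  rw [p1, p2] at b1
  rw [p3, p4] at b2
  linarith


noncomputable def trim (M : Matrix (Fin 4) (Fin 4) ℂ) : Matrix (Fin 4) (Fin 4) ℂ :=
  Matrix.of fun i j => if i = 0 ∨ j = 0 then 0 else M i j

lemma trim_mulVec (M : Matrix (Fin 4) (Fin 4) ℂ) (v : Fin 4 → ℂ) (hv : v 0 = 0) :
    trim M *ᵥ v = fun i => if i = 0 then 0 else (M *ᵥ v) i := by
  funext i
  rw [mulVec_def]
  by_cases hi : i = 0
  · simp [hi, trim]
  · simp only [hi, if_false, mulVec_def]
    refine Finset.sum_congr rfl fun j _ => ?_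
    by_cases hj : j = 0
    · subst hj; simp [hv]
    · simp [trim, hi, hj]

lemma cdot_ite (w z : Fin 4 → ℂ) (hw : w 0 = 0) :
    cdot w (fun i => if i = 0 then 0 else z i) = cdot w z := by
  simp only [cdot]
  refine Finset.sum_congr rfl fun i _ => ?_
  by_cases hi : i = 0
  · subst hi; simp [hw]
  · simp [hi]

lemma cdot_neg_right (a b : Fin 4 → ℂ) : cdot a (-b) = -cdot a b := by
  simp only [cdot, Pi.neg_apply, mul_neg, ← Finset.sum_neg_distrib]

lemma exists_w (A B : Matrix (Fin 4) (Fin 4) ℂ) :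
    ∃ w : Fin 4 → ℂ, cdot w w = 1 ∧ w 0 = 0 ∧ (A *ᵥ w) 0 = 0 ∧ (B *ᵥ w) 0 = 0 := by
  let φ : (Fin 4 → ℂ) →ₗ[ℂ] (Fin 3 → ℂ) :=
    { toFun := fun v => ![v 0, (A *ᵥ v) 0, (B *ᵥ v) 0]
      map_add' := by
        intro a b; funext k
        fin_cases k <;> simp [Matrix.mulVec_add]
      map_smul' := by
        intro c a; funext k
        fin_cases k <;> simp [Matrix.mulVec_smul] }
  have hker : ∃ v : Fin 4 → ℂ, v ≠ 0 ∧ φ v = 0 := by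
    by_contra h
    push_neg at h
    have hinj : Function.Injective φ := by
      rw [← LinearMap.ker_eq_bot, Submodule.eq_bot_iff]
      intro v hv
      by_contra hv0
      exact h v hv0 hv
    have hle := LinearMap.finrank_le_finrank_of_injective hinj
    simp only [Module.finrank_fintype_fun_eq_card, Fintype.card_fin] at hle
    omega
  obtain ⟨v, hv0, hv⟩ := hker
  have h0 : v 0 = 0 := by
    have := congrFun hv 0; simpa [φ] using this
  have hA0 : (A *ᵥ v) 0 = 0 := by
    have := congrFun hv 1; simpa [φ] using this
  have hB0 : (B *ᵥ v) 0 = 0 := by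
    have := congrFun hv 2; simpa [φ] using this
  have hpos : 0 < vns v := by
    obtain ⟨i, hi⟩ := Function.ne_iff.mp hv0
    exact Finset.sum_pos' (fun j _ => Complex.normSq_nonneg _)
      ⟨i, Finset.mem_univ i, Complex.normSq_pos.mpr (by simpa using hi)⟩
  set c : ℝ := Real.sqrt (vns v) with hc
  have hcpos : 0 < c := Real.sqrt_pos.mpr hpos
  refine ⟨fun i => ((c⁻¹ : ℝ) : ℂ) * v i, ?_, ?_, ?_, ?_⟩
  · rw [cdot_smul_left, cdot_smul_right, cdot_self]
    rw [Complex.conj_ofReal]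
    have : (vns v : ℂ) = ((c * c : ℝ) : ℂ) := by
      rw [← Real.mul_self_sqrt (le_of_lt hpos)]
    rw [this]
    push_cast
    field_simp
    rw [div_self]
    exact_mod_cast ne_of_gt hcpos
  · simp [h0]
  · have : A *ᵥ (fun i => ((c⁻¹ : ℝ) : ℂ) * v i) = fun i => ((c⁻¹ : ℝ) : ℂ) * (A *ᵥ v) i := by
      funext i; rw [mulVec_def, mulVec_def, Finset.mul_sum]
      exact Finset.sum_congr rfl fun j _ => by ring
    rw [this]; simp [hA0]
  · have : B *ᵥ (fun i => ((c⁻¹ : ℝ) : ℂ) * v i) = fun i => ((c⁻¹ : ℝ) : ℂ) * (B *ᵥ v) i := by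
      funext i; rw [mulVec_def, mulVec_def, Finset.mul_sum]
      exact Finset.sum_congr rfl fun j _ => by ring
    rw [this]; simp [hB0]


lemma fns_decomp (M : Matrix (Fin 4) (Fin 4) ℂ) :
    fns M = (∑ i, Complex.normSq (M i 0)) + (∑ j, Complex.normSq (M 0 j))
      - Complex.normSq (M 0 0) + fns (trim M) := by
  simp only [fns, trim, Matrix.of_apply, Fin.sum_univ_four]
  simp (config := { decide := true }) only [Fin.ext_iff]
  norm_num
  ring

lemma lower (A B : Matrix (Fin 4) (Fin 4) ℂ)
    (hC : A * B - B * A = Matrix.diagonal ![-1, 1/3, 1/3, 1/3]) :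
    (8:ℝ)/3 ≤ fns A + fns B := by
  set D : Matrix (Fin 4) (Fin 4) ℂ := Matrix.diagonal ![-1, 1/3, 1/3, 1/3] with hD
  -- outer bound at e1
  set e₁ : Fin 4 → ℂ := fun i => if i = 0 then 1 else 0 with he₁def
  have he1 : cdot e₁ e₁ = 1 := by simp [cdot, Fin.sum_univ_four, he₁def]
  have hsub : ∀ (X Y : Matrix (Fin 4) (Fin 4) ℂ) (z : Fin 4 → ℂ),
      cdot z ((X - Y) *ᵥ z) = cdot z (X *ᵥ z) - cdot z (Y *ᵥ z) := by
    intro X Y z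
    rw [Matrix.sub_mulVec]
    exact cdot_sub_right z _ _
  have hBA : (B * A) - (A * B) = -D := by rw [← hC, neg_sub]
  have hout := commb B A e₁ he1
  have hDe1 : cdot e₁ (D *ᵥ e₁) = -1 := by
    simp [cdot, Fin.sum_univ_four, he₁def, hD, Matrix.mulVec_diagonal]
  have houtL : (cdot e₁ ((B * A - A * B) *ᵥ e₁)).re = 1 := by
    rw [hBA, Matrix.neg_mulVec, cdot_neg_right, hDe1]
    norm_num
  rw [houtL] at hout
  have hAe1 : A *ᵥ e₁ = fun i => A i 0 := by
    funext i; rw [mulVec_def]; simp [he₁def, Fin.sum_univ_four]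
  have hBe1 : B *ᵥ e₁ = fun i => B i 0 := by
    funext i; rw [mulVec_def]; simp [he₁def, Fin.sum_univ_four]
  have hAHe1 : Aᴴ *ᵥ e₁ = fun j => (starRingEnd ℂ) (A 0 j) := by
    funext j; rw [mulVec_def]
    simp [he₁def, Fin.sum_univ_four, Matrix.conjTranspose_apply]
  have hBHe1 : Bᴴ *ᵥ e₁ = fun j => (starRingEnd ℂ) (B 0 j) := by
    funext j; rw [mulVec_def]
    simp [he₁def, Fin.sum_univ_four, Matrix.conjTranspose_apply]
  have hxA : cdot e₁ (A *ᵥ e₁) = A 0 0 := by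
    rw [hAe1]; simp [cdot, he₁def, Fin.sum_univ_four]
  have hxB : cdot e₁ (B *ᵥ e₁) = B 0 0 := by
    rw [hBe1]; simp [cdot, he₁def, Fin.sum_univ_four]
  rw [hxA, hxB, hAe1, hBe1, hAHe1, hBHe1] at hout
  have hvA : vns (fun j => (starRingEnd ℂ) (A 0 j)) = ∑ j, Complex.normSq (A 0 j) := by
    simp [vns, Complex.normSq_conj]
  have hvB : vns (fun j => (starRingEnd ℂ) (B 0 j)) = ∑ j, Complex.normSq (B 0 j) := by
    simp [vns, Complex.normSq_conj]
  rw [hvA, hvB] at hout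
  -- hout : 1 ≤ (colB + rowB - 2nsB + colA + rowA - 2nsA)/2  (vns col terms remain as `vns`)
  -- inner bound
  obtain ⟨w, hw, hw0, hA0, hB0⟩ := exists_w A B
  have hTAw : trim A *ᵥ w = A *ᵥ w := by
    rw [trim_mulVec A w hw0]
    funext i
    by_cases hi : i = 0
    · simp [hi, hA0]
    · simp [hi]
  have hTBw : trim B *ᵥ w = B *ᵥ w := by
    rw [trim_mulVec B w hw0]
    funext i
    by_cases hi : i = 0
    · simp [hi, hB0]
    · simp [hi]
  have h1 : cdot w ((trim A * trim B) *ᵥ w) = cdot w ((A * B) *ᵥ w) := by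
    rw [← Matrix.mulVec_mulVec, hTBw, trim_mulVec A _ hB0, cdot_ite _ _ hw0,
      Matrix.mulVec_mulVec]
  have h2 : cdot w ((trim B * trim A) *ᵥ w) = cdot w ((B * A) *ᵥ w) := by
    rw [← Matrix.mulVec_mulVec, hTAw, trim_mulVec B _ hA0, cdot_ite _ _ hw0,
      Matrix.mulVec_mulVec]
  have hcw := hw
  simp only [cdot, Fin.sum_univ_four, hw0, map_zero, zero_mul, zero_add] at hcw
  have hDw : cdot w (D *ᵥ w) = 1/3 := by
    have hDwv : D *ᵥ w = fun i => (![-1, 1/3, 1/3, 1/3] : Fin 4 → ℂ) i * w i := by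
      funext i; simp [hD, Matrix.mulVec_diagonal]
    rw [hDwv]
    simp only [cdot, Fin.sum_univ_four, hw0, mul_zero, zero_mul, map_zero, zero_add]
    simp only [Matrix.cons_val_one, Matrix.head_cons, Matrix.cons_val_two, Matrix.tail_cons,
      Matrix.cons_val_three, Matrix.cons_val_zero]
    linear_combination (1/3 : ℂ) * hcw
  have hinL : (cdot w ((trim A * trim B - trim B * trim A) *ᵥ w)).re = 1/3 := by
    rw [hsub, h1, h2, ← hsub, hC, hDw]
    norm_num
  have hin := commb (trim A) (trim B) w hw
  rw [hinL] at hin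
  have nb1 := normb (trim A) w hw
  have nb2 := normb (trim B) w hw
  have d1 := fns_decomp A
  have d2 := fns_decomp B
  have nn1 := Complex.normSq_nonneg (A 0 0)
  have nn2 := Complex.normSq_nonneg (B 0 0)
  have nn3 := Complex.normSq_nonneg (cdot w (trim A *ᵥ w))
  have nn4 := Complex.normSq_nonneg (cdot w (trim B *ᵥ w))
  have hvcolA : vns (fun i => A i 0) = ∑ i, Complex.normSq (A i 0) := rfl
  have hvcolB : vns (fun i => B i 0) = ∑ i, Complex.normSq (B i 0) := rfl
  rw [hvcolA, hvcolB] at hout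
  linarith

end CommLB


lemma hs3c : ((Real.sqrt 3 : ℝ) : ℂ) * ((Real.sqrt 3 : ℝ) : ℂ) = 3 := by
  rw [← Complex.ofReal_mul, Real.mul_self_sqrt (by norm_num)]
  norm_num

lemma hs2c : ((Real.sqrt 2 : ℝ) : ℂ) * ((Real.sqrt 2 : ℝ) : ℂ) = 2 := by
  rw [← Complex.ofReal_mul, Real.mul_self_sqrt (by norm_num)]
  norm_num

lemma hs3ne : ((Real.sqrt 3 : ℝ) : ℂ) ≠ 0 := by
  simpa using Complex.ofReal_ne_zero.mpr (ne_of_gt (Real.sqrt_pos.mpr (by norm_num)))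

lemma comm_eq : Amat * Bmat - Bmat * Amat = Matrix.diagonal ![-1, 1/3, 1/3, 1/3] := by
  ext i j
  fin_cases i <;> fin_cases j <;>
    simp (config := { decide := true }) [Amat, Bmat, Matrix.mul_apply, Fin.sum_univ_four,
      Matrix.diagonal_apply] <;>
    (try simp only [Matrix.vecHead, Matrix.vecTail, Function.comp_apply,
      mul_zero, zero_mul, mul_one, one_mul, add_zero, zero_add]) <;>
    try field_simp
  · linear_combination hs3c - hs2c
  · linear_combination 3 * hs2c - hs3c
  · linear_combination -hs3c
  · linear_combination -hs3c

lemma normA : frobeniusNorm Amat = Real.sqrt (4/3) := by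
  unfold frobeniusNorm
  congr 1
  simp [Amat, Fin.sum_univ_four, norm_mul, norm_div, Complex.norm_real,
    Matrix.vecHead, Matrix.vecTail, Function.comp_apply]
  rw [_root_.abs_of_nonneg (Real.sqrt_nonneg 3), _root_.abs_of_nonneg (Real.sqrt_nonneg 2)]
  have h3 : (Real.sqrt 3) ^ 2 = 3 := Real.sq_sqrt (by norm_num)
  have h2 : (Real.sqrt 2) ^ 2 = 2 := Real.sq_sqrt (by norm_num)
  have h3ne : Real.sqrt 3 ≠ 0 := ne_of_gt (Real.sqrt_pos.mpr (by norm_num))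
  field_simp
  nlinarith [h2, h3]

lemma normB : frobeniusNorm Bmat = Real.sqrt (4/3) := by
  unfold frobeniusNorm
  congr 1
  simp [Bmat, Fin.sum_univ_four, norm_mul, norm_div, Complex.norm_real,
    Matrix.vecHead, Matrix.vecTail, Function.comp_apply]
  rw [_root_.abs_of_nonneg (Real.sqrt_nonneg 3), _root_.abs_of_nonneg (Real.sqrt_nonneg 2)]
  have h3 : (Real.sqrt 3) ^ 2 = 3 := Real.sq_sqrt (by norm_num)
  have h2 : (Real.sqrt 2) ^ 2 = 2 := Real.sq_sqrt (by norm_num)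
  have h3ne : Real.sqrt 3 ≠ 0 := ne_of_gt (Real.sqrt_pos.mpr (by norm_num))
  field_simp
  nlinarith [h2, h3]


lemma frob_eq_sqrt_fns (M : Matrix (Fin 4) (Fin 4) ℂ) :
    frobeniusNorm M = Real.sqrt (CommLB.fns M) := by
  unfold frobeniusNorm CommLB.fns
  congr 1
  refine Finset.sum_congr rfl fun i _ => Finset.sum_congr rfl fun j _ => ?_
  rw [Complex.sq_norm]

theorem stmt_1 :
    Amat * Bmat - Bmat * Amat = Matrix.diagonal ![-1, 1/3, 1/3, 1/3] ∧
    frobeniusNorm Amat = Real.sqrt (4/3) ∧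
    frobeniusNorm Bmat = Real.sqrt (4/3) ∧
    IsLeast {x : ℝ | ∃ A B : Matrix (Fin 4) (Fin 4) ℂ,
        A * B - B * A = Matrix.diagonal ![-1, 1/3, 1/3, 1/3] ∧
        frobeniusNorm A = frobeniusNorm B ∧ x = frobeniusNorm A}
      (Real.sqrt (4/3)) := by
  refine ⟨comm_eq, normA, normB, ⟨Amat, Bmat, comm_eq, by rw [normA, normB], normA.symm⟩, ?_⟩
  rintro x ⟨A, B, hC, hEq, rfl⟩
  have hfA := frob_eq_sqrt_fns A
  have hfB := frob_eq_sqrt_fns B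
  have h8 := CommLB.lower A B hC
  have hEq' : CommLB.fns A = CommLB.fns B := by
    rw [hfA, hfB] at hEq
    exact (Real.sqrt_inj (CommLB.fns_nonneg A) (CommLB.fns_nonneg B)).mp hEq
  have h43 : (4:ℝ)/3 ≤ CommLB.fns A := by linarith
  rw [hfA]
  exact Real.sqrt_le_sqrt h43
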